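/- arXiv:2001.06213 — 4 statements merged into one kernel-verified Lean document; each statement's English description precedes it below -/
import Mathlib

section
/- Let q = a + b·i + c·j + d·k be a nonzero real quaternion and set |q| = √(a² + b² + c² + d²). For every integer n ≥ 1, write q^n = A_n + B_n·i + C_n·j + D_n·k with A_n, B_n, C_n, D_n real. Then A_n = (|q|^n/2)·(U_n(a/|q|) − U_{n−2}(a/|q|)), B_n = b·|q|^{n−1}·U_{n−1}(a/|q|), C_n = c·|q|^{n−1}·U_{n−1}(a/|q|), and D_n = d·|q|^{n−1}·U_{n−1}(a/|q|). -/
/-- Powers of a quaternion: if `q = a + bi + cj + dk ≠ 0` and `|q| = √(a²+b²+c²+d²)`,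
then writing `qⁿ = Aₙ + Bₙ i + Cₙ j + Dₙ k`, one has
`Aₙ = (|q|ⁿ/2)(U_n(a/|q|) − U_{n−2}(a/|q|))` and
`Bₙ = b|q|^{n−1} U_{n−1}(a/|q|)`, `Cₙ = c|q|^{n−1} U_{n−1}(a/|q|)`,
`Dₙ = d|q|^{n−1} U_{n−1}(a/|q|)`, where `U` is the Chebyshev polynomial of the
second kind (with `U_{−1} = 0`). -/
theorem quaternion_pow_chebyshevU (q : Quaternion ℝ) (hq : q ≠ 0) (n : ℕ) (hn : 1 ≤ n) :
    (q ^ n).re = Real.sqrt (q.re ^ 2 + q.imI ^ 2 + q.imJ ^ 2 + q.imK ^ 2) ^ n / 2 *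
        ((Polynomial.Chebyshev.U ℝ (n : ℤ)).eval
            (q.re / Real.sqrt (q.re ^ 2 + q.imI ^ 2 + q.imJ ^ 2 + q.imK ^ 2))
          - (Polynomial.Chebyshev.U ℝ ((n : ℤ) - 2)).eval
            (q.re / Real.sqrt (q.re ^ 2 + q.imI ^ 2 + q.imJ ^ 2 + q.imK ^ 2))) ∧
    (q ^ n).imI = q.imI * Real.sqrt (q.re ^ 2 + q.imI ^ 2 + q.imJ ^ 2 + q.imK ^ 2) ^ (n - 1) *
        (Polynomial.Chebyshev.U ℝ ((n : ℤ) - 1)).eval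
          (q.re / Real.sqrt (q.re ^ 2 + q.imI ^ 2 + q.imJ ^ 2 + q.imK ^ 2)) ∧
    (q ^ n).imJ = q.imJ * Real.sqrt (q.re ^ 2 + q.imI ^ 2 + q.imJ ^ 2 + q.imK ^ 2) ^ (n - 1) *
        (Polynomial.Chebyshev.U ℝ ((n : ℤ) - 1)).eval
          (q.re / Real.sqrt (q.re ^ 2 + q.imI ^ 2 + q.imJ ^ 2 + q.imK ^ 2)) ∧
    (q ^ n).imK = q.imK * Real.sqrt (q.re ^ 2 + q.imI ^ 2 + q.imJ ^ 2 + q.imK ^ 2) ^ (n - 1) *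
        (Polynomial.Chebyshev.U ℝ ((n : ℤ) - 1)).eval
          (q.re / Real.sqrt (q.re ^ 2 + q.imI ^ 2 + q.imJ ^ 2 + q.imK ^ 2)) := by
  obtain ⟨m, rfl⟩ : ∃ m, n = m + 1 := ⟨n - 1, (Nat.succ_pred_eq_of_pos hn).symm⟩
  clear hn
  set r := Real.sqrt (q.re ^ 2 + q.imI ^ 2 + q.imJ ^ 2 + q.imK ^ 2) with hrdef
  have hsum : 0 ≤ q.re ^ 2 + q.imI ^ 2 + q.imJ ^ 2 + q.imK ^ 2 := by positivity
  have hr2 : r ^ 2 = q.re ^ 2 + q.imI ^ 2 + q.imJ ^ 2 + q.imK ^ 2 := Real.sq_sqrt hsum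
  have hrpos : 0 < r := by
    rw [hrdef]
    apply Real.sqrt_pos.2
    have hns : Quaternion.normSq q ≠ 0 := Quaternion.normSq_ne_zero.2 hq
    rw [Quaternion.normSq_def'] at hns
    exact hsum.lt_of_ne (Ne.symm hns)
  have hrne : r ≠ 0 := ne_of_gt hrpos
  set x := q.re / r with hxdef
  have hax : q.re = r * x := by
    rw [hxdef, mul_div_assoc', mul_comm, mul_div_assoc, div_self hrne, mul_one]
  have him : q.imI ^ 2 + q.imJ ^ 2 + q.imK ^ 2 = r ^ 2 - (r * x) ^ 2 := by
    rw [← hax]; linarith [hr2]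
  have key : ∀ k : ℤ, (Polynomial.Chebyshev.U ℝ (k + 2)).eval x
      = 2 * x * (Polynomial.Chebyshev.U ℝ (k + 1)).eval x
        - (Polynomial.Chebyshev.U ℝ k).eval x := by
    intro k
    rw [Polynomial.Chebyshev.U_add_two]
    simp
  induction m with
  | zero =>
    have h1 : ((0 + 1 : ℕ) : ℤ) = 1 := by norm_num
    rw [h1, show (1:ℤ) - 2 = -1 by norm_num, show (1:ℤ) - 1 = 0 by norm_num,
      Polynomial.Chebyshev.U_one, Polynomial.Chebyshev.U_neg_one, Polynomial.Chebyshev.U_zero]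
    simp only [zero_add, pow_one, Nat.sub_self, pow_zero, Polynomial.eval_zero,
      Polynomial.eval_one, Polynomial.eval_mul, Polynomial.eval_X, Polynomial.eval_ofNat,
      mul_one, sub_zero]
    exact ⟨by rw [hax]; ring, trivial, trivial, trivial⟩
  | succ m ih =>
    obtain ⟨hA, hB, hC, hD⟩ := ih
    have hpow : q ^ (m + 1 + 1) = q ^ (m + 1) * q := pow_succ q (m + 1)
    have e0 : ((m + 1 + 1 : ℕ) : ℤ) = (m : ℤ) + 2 := by push_cast; ring
    have e1 : (m : ℤ) + 2 - 1 = (m : ℤ) + 1 := by ring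
    have e2 : (m : ℤ) + 2 - 2 = (m : ℤ) := by ring
    have f0 : ((m + 1 : ℕ) : ℤ) = (m : ℤ) + 1 := by push_cast; ring
    have f1 : (m : ℤ) + 1 - 1 = (m : ℤ) := by ring
    have f2 : (m : ℤ) + 1 - 2 = (m : ℤ) - 1 := by ring
    simp only [f0, f1, f2, Nat.add_sub_cancel] at hA hB hC hD
    have g1 := key m
    have g2 := key ((m : ℤ) - 1)
    rw [show (m : ℤ) - 1 + 2 = (m : ℤ) + 1 by ring, show (m : ℤ) - 1 + 1 = (m : ℤ) by ring] at g2
    rw [hpow, Quaternion.re_mul, Quaternion.imI_mul, Quaternion.imJ_mul, Quaternion.imK_mul]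
    simp only [e0, e1, e2, Nat.add_sub_cancel]
    rw [hA, hB, hC, hD, hax, g1, g2]
    refine ⟨?_, by ring, by ring, by ring⟩
    linear_combination (-(r ^ m * Polynomial.eval x (Polynomial.Chebyshev.U ℝ (m : ℤ)))) * him
end

section
/- Let l ≥ 1 and let a, b, c : ℤ → ℂ be l-periodic sequences. Let p be an integer, let T = tr A_l(p), let D = det A_l(p) = Π_{j=1}^{l} b_{p+j−1}·c_{p+j−1}, assume D ≠ 0, and let d be a complex number with d² = D. Then for every integer m ≥ 1, K_{lm}(p) = d^{m−1}·U_{m−1}(T/(2d))·K_l(p) − d^m·U_{m−2}(T/(2d)). -/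
/-- The continuant `K_n(p)` of the sequences `a b c : ℤ → ℂ`: the determinant of the
`n × n` tridiagonal matrix with diagonal `a_p, …, a_{p+n-1}`, superdiagonal
`b_p, …, b_{p+n-2}` and subdiagonal `c_p, …, c_{p+n-2}`; it equals `1` for `n = 0`
and `0` for `n < 0`. -/
noncomputable def contK (a b c : ℤ → ℂ) (p n : ℤ) : ℂ :=
  if n < 0 then 0 else
    Matrix.det (Matrix.of fun i j : Fin n.toNat =>
      if (i : ℕ) = (j : ℕ) then a (p + (i : ℕ))
      else if (i : ℕ) + 1 = (j : ℕ) then b (p + (i : ℕ))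
      else if (i : ℕ) = (j : ℕ) + 1 then c (p + (j : ℕ))
      else 0)

/-- The 2×2 matrix `L(α, β)` with first row `(α, β)` and second row `(1, 0)`. -/
def Lmat (α β : ℂ) : Matrix (Fin 2) (Fin 2) ℂ := !![α, β; 1, 0]

/-- `A_n(p) = L(a_p, −b_p c_p) ⋯ L(a_{p+n−1}, −b_{p+n−1} c_{p+n−1})`. -/
noncomputable def Amat (a b c : ℤ → ℂ) (p : ℤ) (n : ℕ) : Matrix (Fin 2) (Fin 2) ℂ :=
  ((List.range n).map (fun i => Lmat (a (p + (i : ℕ))) (-(b (p + (i : ℕ)) * c (p + (i : ℕ)))))).prod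

open Matrix Polynomial Polynomial.Chebyshev

/-! ### Auxiliary lemmas -/

/-- The tridiagonal matrix underlying `contK`. -/
noncomputable def triM (a b c : ℤ → ℂ) (p : ℤ) (n : ℕ) : Matrix (Fin n) (Fin n) ℂ :=
  Matrix.of fun i j : Fin n =>
      if (i : ℕ) = (j : ℕ) then a (p + (i : ℕ))
      else if (i : ℕ) + 1 = (j : ℕ) then b (p + (i : ℕ))
      else if (i : ℕ) = (j : ℕ) + 1 then c (p + (j : ℕ))
      else 0

lemma contK_natCast (a b c : ℤ → ℂ) (p : ℤ) (n : ℕ) :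
    contK a b c p (n : ℤ) = (triM a b c p n).det := by
  unfold contK triM
  rw [if_neg (by omega)]; rfl

lemma contK_neg (a b c : ℤ → ℂ) (p : ℤ) {n : ℤ} (hn : n < 0) : contK a b c p n = 0 := by
  unfold contK; rw [if_pos hn]

lemma contK_zero (a b c : ℤ → ℂ) (p : ℤ) : contK a b c p 0 = 1 := by
  have := contK_natCast a b c p 0
  simpa [triM] using this

lemma contK_one (a b c : ℤ → ℂ) (p : ℤ) : contK a b c p 1 = a p := by
  have := contK_natCast a b c p 1
  rw [show ((1:ℕ):ℤ) = 1 from rfl] at this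
  rw [this, det_fin_one]
  simp [triM]

lemma triM_det_rec (a b c : ℤ → ℂ) (p : ℤ) (n : ℕ) :
    (triM a b c p (n+2)).det =
      a p * (triM a b c (p+1) (n+1)).det - b p * c p * (triM a b c (p+2) n).det := by
  have hsa : ∀ j : Fin (n+1), (((1 : Fin (n+2)).succAbove j : ℕ)) = if (j:ℕ) = 0 then 0 else (j:ℕ)+1 := by
    intro j
    rcases j with ⟨jv, hj⟩
    simp [Fin.succAbove, Fin.lt_def]
    split_ifs <;> simp_all
  have h1 : (triM a b c p (n+2)).submatrix Fin.succ ((0:Fin (n+2)).succAbove)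
      = triM a b c (p+1) (n+1) := by
    ext i j
    simp only [Fin.succAbove_zero, submatrix_apply, triM, of_apply, Fin.val_succ]
    have e1 : ((i:ℕ)+1 = (j:ℕ)+1) ↔ ((i:ℕ) = (j:ℕ)) := by omega
    have e2 : ((i:ℕ)+1+1 = (j:ℕ)+1) ↔ ((i:ℕ)+1 = (j:ℕ)) := by omega
    have e3 : ((i:ℕ)+1 = (j:ℕ)+1+1) ↔ ((i:ℕ) = (j:ℕ)+1) := by omega
    have v1 : (p + (((i:ℕ)+1 : ℕ) : ℤ)) = p + 1 + (i:ℕ) := by push_cast; ring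
    have v2 : (p + (((j:ℕ)+1 : ℕ) : ℤ)) = p + 1 + (j:ℕ) := by push_cast; ring
    simp only [e1, e2, e3, v1, v2]
  set N := (triM a b c p (n+2)).submatrix Fin.succ ((1:Fin (n+2)).succAbove) with hN
  have h2 : N.submatrix Fin.succ Fin.succ = triM a b c (p+2) n := by
    ext i j
    simp only [hN, submatrix_apply, triM, of_apply, Fin.val_succ]
    rw [hsa]
    simp only [Fin.val_succ, Nat.succ_ne_zero, if_false]
    have e1 : ((i:ℕ)+1+1 = (j:ℕ)+1+1) ↔ ((i:ℕ) = (j:ℕ)) := by omega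
    have e2 : ((i:ℕ)+1+1+1 = (j:ℕ)+1+1) ↔ ((i:ℕ)+1 = (j:ℕ)) := by omega
    have e3 : ((i:ℕ)+1+1 = (j:ℕ)+1+1+1) ↔ ((i:ℕ) = (j:ℕ)+1) := by omega
    have v1 : (p + (((i:ℕ)+1+1 : ℕ) : ℤ)) = p + 2 + (i:ℕ) := by push_cast; ring
    have v2 : (p + (((j:ℕ)+1+1 : ℕ) : ℤ)) = p + 2 + (j:ℕ) := by push_cast; ring
    simp only [e1, e2, e3, v1, v2]
  have hNdet : N.det = c p * (triM a b c (p+2) n).det := by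
    rw [det_succ_column_zero]
    rw [Fin.sum_univ_succ]
    have hN00 : N 0 0 = c p := by
      simp only [hN, submatrix_apply, triM, of_apply]
      rw [hsa]
      norm_num
    have htail : ∀ i : Fin n, N i.succ 0 = 0 := by
      intro i
      simp only [hN, submatrix_apply, triM, of_apply]
      rw [hsa]
      simp only [Fin.val_succ, Fin.val_zero]
      split_ifs <;> first | rfl | omega | tauto
    rw [hN00]
    have hz : ∑ i : Fin n, (-1:ℂ)^((i.succ:ℕ)) * N i.succ 0 *
        (N.submatrix i.succ.succAbove Fin.succ).det = 0 := by
      apply Finset.sum_eq_zero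
      intro i _
      rw [htail]; ring
    rw [hz, Fin.succAbove_zero, h2]
    norm_num
  rw [det_succ_row_zero, Fin.sum_univ_succ, Fin.sum_univ_succ]
  have hM00 : triM a b c p (n+2) 0 0 = a p := by simp [triM]
  have hM01 : triM a b c p (n+2) 0 (Fin.succ 0) = b p := by
    simp [triM, Fin.val_succ]
  have htail : ∀ j : Fin n, triM a b c p (n+2) 0 j.succ.succ = 0 := by
    intro j
    simp only [triM, of_apply, Fin.val_succ, Fin.val_zero]
    split_ifs <;> first | rfl | omega | tauto
  have hz : ∑ j : Fin n, (-1:ℂ)^((j.succ.succ:ℕ)) * triM a b c p (n+2) 0 j.succ.succ *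
      ((triM a b c p (n+2)).submatrix Fin.succ j.succ.succ.succAbove).det = 0 := by
    apply Finset.sum_eq_zero
    intro j _
    rw [htail]; ring
  rw [hz, hM00, hM01, h1]
  have hs1 : (Fin.succ (0 : Fin (n+1))) = (1 : Fin (n+2)) := rfl
  rw [hs1, ← hN, hNdet]
  norm_num
  ring

lemma contK_rec (a b c : ℤ → ℂ) (p : ℤ) (n : ℕ) :
    contK a b c p ((n:ℤ)+2) =
      a p * contK a b c (p+1) ((n:ℤ)+1) - b p * c p * contK a b c (p+2) (n:ℤ) := by
  have e2 : ((n:ℤ)+2) = (((n+2:ℕ)):ℤ) := by push_cast; ring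
  have e1 : ((n:ℤ)+1) = (((n+1:ℕ)):ℤ) := by push_cast; ring
  rw [e2, e1, contK_natCast, contK_natCast, contK_natCast, triM_det_rec]

lemma Amat_zero (a b c : ℤ → ℂ) (p : ℤ) : Amat a b c p 0 = 1 := by
  simp [Amat]

lemma Amat_succ_left (a b c : ℤ → ℂ) (p : ℤ) (n : ℕ) :
    Amat a b c p (n+1) = Lmat (a p) (-(b p * c p)) * Amat a b c (p+1) n := by
  unfold Amat
  rw [List.range_succ_eq_map]
  simp only [List.map_cons, List.prod_cons, List.map_map]
  norm_num
  congr 1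
  apply congrArg List.prod
  apply List.map_congr_left
  intro i _
  simp only [Function.comp_apply]
  have e : p + ((i+1 : ℕ) : ℤ) = p + 1 + (i : ℕ) := by push_cast; ring
  rw [e]

lemma Amat_succ_right (a b c : ℤ → ℂ) (p : ℤ) (n : ℕ) :
    Amat a b c p (n+1) = Amat a b c p n * Lmat (a (p+(n:ℕ))) (-(b (p+(n:ℕ)) * c (p+(n:ℕ)))) := by
  unfold Amat
  rw [List.range_succ]
  simp

lemma Amat_add (a b c : ℤ → ℂ) (p : ℤ) (m n : ℕ) :
    Amat a b c p (m+n) = Amat a b c p m * Amat a b c (p + (m:ℕ)) n := by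
  induction n with
  | zero => simp [Amat_zero]
  | succ k ih =>
      rw [← Nat.add_assoc, Amat_succ_right, ih, Amat_succ_right, mul_assoc]
      congr 2 <;> push_cast <;> ring_nf

lemma Amat_shift (a b c : ℤ → ℂ) (l : ℕ)
    (ha : ∀ k : ℤ, a (k + l) = a k) (hb : ∀ k : ℤ, b (k + l) = b k)
    (hc : ∀ k : ℤ, c (k + l) = c k) (p : ℤ) (n : ℕ) :
    Amat a b c (p + (l:ℤ)) n = Amat a b c p n := by
  unfold Amat
  apply congrArg List.prod
  apply List.map_congr_left
  intro i _
  have e : p + (l:ℤ) + (i:ℕ) = (p + (i:ℕ)) + (l:ℤ) := by ring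
  rw [e, ha, hb, hc]

lemma Amat_shift_mul (a b c : ℤ → ℂ) (l : ℕ)
    (ha : ∀ k : ℤ, a (k + l) = a k) (hb : ∀ k : ℤ, b (k + l) = b k)
    (hc : ∀ k : ℤ, c (k + l) = c k) (p : ℤ) (m n : ℕ) :
    Amat a b c (p + ((l*m : ℕ):ℤ)) n = Amat a b c p n := by
  induction m with
  | zero => norm_num
  | succ k ih =>
      have e : p + ((l*(k+1) : ℕ):ℤ) = (p + ((l*k : ℕ):ℤ)) + (l:ℤ) := by push_cast; ring
      rw [e, Amat_shift a b c l ha hb hc, ih]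

lemma Amat_pow (a b c : ℤ → ℂ) (l : ℕ)
    (ha : ∀ k : ℤ, a (k + l) = a k) (hb : ∀ k : ℤ, b (k + l) = b k)
    (hc : ∀ k : ℤ, c (k + l) = c k) (p : ℤ) (m : ℕ) :
    Amat a b c p (l*m) = (Amat a b c p l)^m := by
  induction m with
  | zero => simp [Amat_zero]
  | succ k ih =>
      have : l*(k+1) = l*k + l := by ring
      rw [this, Amat_add, ih, Amat_shift_mul a b c l ha hb hc, pow_succ]

lemma Amat_entries (a b c : ℤ → ℂ) : ∀ (n : ℕ) (p : ℤ),
    Amat a b c p n 0 0 = contK a b c p (n:ℤ) ∧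
    Amat a b c p n 1 0 = contK a b c (p+1) ((n:ℤ)-1) := by
  intro n
  induction n with
  | zero =>
      intro p
      constructor
      · simp [Amat_zero, Matrix.one_apply, contK_zero]
      · simp only [Amat_zero, Matrix.one_apply]
        rw [contK_neg a b c (p+1) (by norm_num)]
        norm_num
  | succ k ih =>
      intro p
      obtain ⟨h00, h10⟩ := ih (p+1)
      rw [Amat_succ_left]
      constructor
      · rw [Matrix.mul_apply, Fin.sum_univ_two]
        have l0 : Lmat (a p) (-(b p * c p)) 0 0 = a p := rfl
        have l1 : Lmat (a p) (-(b p * c p)) 0 1 = -(b p * c p) := rfl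
        rw [l0, l1, h00, h10]
        cases k with
        | zero =>
            push_cast
            rw [contK_zero, contK_neg a b c (p+1+1) (by norm_num), contK_one]
            ring
        | succ j =>
            have e : (((j+1+1 : ℕ)):ℤ) = (j:ℤ)+2 := by push_cast; ring
            rw [e, contK_rec]
            have e1 : (((j+1 : ℕ)):ℤ) = (j:ℤ)+1 := by push_cast; ring
            have e2 : (((j+1 : ℕ)):ℤ)-1 = (j:ℤ) := by push_cast; ring
            have e3 : (j:ℤ)+1-1 = (j:ℤ) := by ring
            have e4 : p+1+1 = p+2 := by ring
            rw [e1, e3, e4]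
            ring
      · rw [Matrix.mul_apply, Fin.sum_univ_two]
        have l0 : Lmat (a p) (-(b p * c p)) 1 0 = 1 := rfl
        have l1 : Lmat (a p) (-(b p * c p)) 1 1 = 0 := rfl
        rw [l0, l1, h00]
        have e : (((k+1 : ℕ)):ℤ)-1 = (k:ℤ) := by push_cast; ring
        rw [e]
        ring

lemma sq_eq_trace_smul (A : Matrix (Fin 2) (Fin 2) ℂ) :
    A * A = A.trace • A - A.det • 1 := by
  ext i j
  fin_cases i <;> fin_cases j <;>
    simp [Matrix.mul_apply, Fin.sum_univ_two, Matrix.trace_fin_two, Matrix.det_fin_two,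
      Matrix.smul_apply, Matrix.sub_apply, Matrix.one_apply] <;> ring

lemma pow_eq_cheb (A : Matrix (Fin 2) (Fin 2) ℂ) (T d : ℂ)
    (hT : T = A.trace) (hdet : d ^ 2 = A.det) (hd0 : d ≠ 0) (k : ℕ) :
    A ^ (k+1) = (d ^ k * (U ℂ (k : ℤ)).eval (T / (2*d))) • A
      - (d ^ (k+1) * (U ℂ ((k : ℤ) - 1)).eval (T / (2*d))) • 1 := by
  set x := T / (2*d) with hx
  have hTx : T = 2*d*x := by rw [hx]; field_simp
  have h2 : A * A = T • A - (d^2) • 1 := by rw [sq_eq_trace_smul, ← hT, hdet]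
  induction k using Nat.twoStepInduction with
  | zero => simp [U_zero, U_neg_one]
  | one =>
      have e : A ^ (1+1) = A * A := by rw [pow_succ, pow_one]
      rw [e, h2, hTx]
      push_cast
      simp only [U_one, U_zero, eval_mul, eval_ofNat, eval_X, eval_one,
        show (1:ℤ)-1 = 0 from rfl]
      module
  | more k ih2 ih1 =>
      have hstep : A ^ (k+2+1) = T • A ^ (k+1+1) - (d^2) • A ^ (k+1) := by
        rw [show k+2+1 = (k+1)+1+1 from rfl, pow_succ, pow_succ (A) (k+1), mul_assoc, h2,
          Matrix.mul_sub, mul_smul_comm, mul_smul_comm]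
        simp [← pow_succ]
      have hU2 : U ℂ ((k:ℤ)+1) = 2*X*U ℂ (k:ℤ) - U ℂ ((k:ℤ)-1) := by
        have h := U_add_two ℂ ((k:ℤ)-1)
        rw [show (k:ℤ)-1+2 = (k:ℤ)+1 from by ring, show (k:ℤ)-1+1 = (k:ℤ) from by ring] at h
        exact h
      have hU3 : U ℂ ((k:ℤ)+2) = 2*X*U ℂ ((k:ℤ)+1) - U ℂ (k:ℤ) := U_add_two ℂ (k:ℤ)
      rw [hstep, ih1, ih2]
      push_cast
      rw [show (k:ℤ)+1-1 = (k:ℤ) from by ring, show (k:ℤ)+2-1 = (k:ℤ)+1 from by ring,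
        hU3, hU2]
      simp only [eval_mul, eval_sub, eval_ofNat, eval_X]
      rw [hTx]
      module

/-- Periodic continuants (nonzero determinant case), Rózsa's formula: for `l`-periodic
sequences, with `T = tr A_l(p)`, `D = det A_l(p) = Π_{j=1}^{l} b_{p+j−1} c_{p+j−1} ≠ 0`
and `d² = D`, one has `K_{lm}(p) = d^{m−1}·U_{m−1}(T/(2d))·K_l(p) − d^m·U_{m−2}(T/(2d))`
for all `m ≥ 1`. -/
theorem contK_periodic_det_ne_zero (l : ℕ) (hl : 1 ≤ l) (a b c : ℤ → ℂ)
    (ha : ∀ k : ℤ, a (k + l) = a k) (hb : ∀ k : ℤ, b (k + l) = b k)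
    (hc : ∀ k : ℤ, c (k + l) = c k) (p : ℤ) (T D d : ℂ)
    (hT : T = (Amat a b c p l).trace) (hD : D = (Amat a b c p l).det)
    (hD' : D = ∏ j ∈ Finset.range l, b (p + (j : ℤ)) * c (p + (j : ℤ)))
    (hD0 : D ≠ 0) (hd : d ^ 2 = D) (m : ℕ) (hm : 1 ≤ m) :
    contK a b c p ((l : ℤ) * m) =
      d ^ (m - 1) * (Polynomial.Chebyshev.U ℂ ((m : ℤ) - 1)).eval (T / (2 * d))
          * contK a b c p (l : ℤ)
        - d ^ m * (Polynomial.Chebyshev.U ℂ ((m : ℤ) - 2)).eval (T / (2 * d)) := by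
  obtain ⟨k, rfl⟩ : ∃ k, m = k+1 := ⟨m-1, by omega⟩
  have hd0 : d ≠ 0 := by
    intro h
    apply hD0
    rw [← hd, h]
    ring
  have hcast : ((l:ℤ) * ((k+1:ℕ):ℤ)) = ((l*(k+1) : ℕ):ℤ) := by push_cast; ring
  rw [hcast, ← (Amat_entries a b c (l*(k+1)) p).1,
    Amat_pow a b c l ha hb hc p (k+1),
    pow_eq_cheb (Amat a b c p l) T d hT (by rw [hd, hD]) hd0 k]
  rw [Matrix.sub_apply, Matrix.smul_apply, Matrix.smul_apply, Matrix.one_apply_eq,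
    (Amat_entries a b c l p).1]
  have e1 : (((k+1:ℕ)):ℤ) - 1 = (k:ℤ) := by push_cast; ring
  have e2 : (((k+1:ℕ)):ℤ) - 2 = (k:ℤ) - 1 := by push_cast; ring
  have e3 : (k+1) - 1 = k := by omega
  rw [e1, e2, e3]
  simp only [smul_eq_mul]
  ring
end

section
/- Let a, b, c : ℤ → ℂ be 2-periodic sequences, write a_1 := a_m for odd m, a_2 := a_m for even m, and similarly b_1, b_2, c_1, c_2. Assume b_1c_1b_2c_2 ≠ 0, let s be a complex number with s² = b_1c_1b_2c_2, and set x = (a_1a_2 − b_1c_1 − b_2c_2)/(2s). Then for every integer p and every integer m ≥ 1, K_{2m}(p) = s^{m−1}·U_{m−1}(x)·(a_1a_2 − b_p c_p) − s^m·U_{m−2}(x) and K_{2m−1}(p+1) = s^{m−1}·U_{m−1}(x)·a_{p+1}. -/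

noncomputable def Tmat (a b c : ℤ → ℂ) (p : ℤ) (n : ℕ) : Matrix (Fin n) (Fin n) ℂ :=
  Matrix.of fun i j : Fin n =>
    if (i : ℕ) = (j : ℕ) then a (p + (i : ℕ))
    else if (i : ℕ) + 1 = (j : ℕ) then b (p + (i : ℕ))
    else if (i : ℕ) = (j : ℕ) + 1 then c (p + (j : ℕ))
    else 0

lemma Tmat_det_rec (a b c : ℤ → ℂ) (p : ℤ) (n : ℕ) :
    (Tmat a b c p (n+2)).det
      = a p * (Tmat a b c (p+1) (n+1)).det - b p * c p * (Tmat a b c (p+2) n).det := by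
  rw [Matrix.det_succ_row_zero, Fin.sum_univ_succ, Fin.sum_univ_succ]
  have hz : ∀ j : Fin n, (Tmat a b c p (n+2)) 0 j.succ.succ = 0 := by
    intro j; simp [Tmat]
  simp only [hz, mul_zero, zero_mul, Finset.sum_const_zero, add_zero]
  have h00 : (Tmat a b c p (n+2)) 0 0 = a p := by simp [Tmat]
  have h01 : (Tmat a b c p (n+2)) 0 (Fin.succ 0) = b p := by simp [Tmat]
  have hm0 : (Tmat a b c p (n+2)).submatrix Fin.succ (Fin.succAbove 0)
      = Tmat a b c (p+1) (n+1) := by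
    ext i j
    simp only [Matrix.submatrix_apply, Fin.succAbove_zero, Tmat, Matrix.of_apply,
      Fin.val_succ]
    have : p + ((i:ℕ) + 1 : ℕ) = p + 1 + (i:ℕ) := by push_cast; ring
    rw [this]
    have : p + ((j:ℕ) + 1 : ℕ) = p + 1 + (j:ℕ) := by push_cast; ring
    rw [this]
    simp only [add_left_inj]
  rw [h00, h01, hm0]
  -- second minor
  set N := (Tmat a b c p (n+2)).submatrix Fin.succ ((Fin.succ 0 : Fin (n+2)).succAbove) with hN
  have hNdet : N.det = c p * (Tmat a b c (p+2) n).det := by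
    rw [Matrix.det_succ_column_zero, Fin.sum_univ_succ]
    have hz2 : ∀ i : Fin n, N i.succ 0 = 0 := by
      intro i
      simp [hN, Tmat, Fin.succAbove]
    simp only [hz2, mul_zero, zero_mul, Finset.sum_const_zero, add_zero]
    have hN00 : N 0 0 = c p := by
      simp [hN, Tmat, Fin.succAbove]
    have hm1 : N.submatrix (Fin.succAbove 0) Fin.succ = Tmat a b c (p+2) n := by
      ext i j
      simp only [hN, Matrix.submatrix_apply, Fin.succAbove_zero, Tmat, Matrix.of_apply,
        Fin.val_succ]
      have hsa : ((Fin.succ (0 : Fin (n+1))).succAbove j.succ : ℕ) = (j : ℕ) + 2 := by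
        simp [Fin.succAbove, Fin.lt_def]
      rw [hsa]
      have e1 : p + ((i:ℕ)+1+1 : ℕ) = p + 2 + (i:ℕ) := by push_cast; ring
      have e2 : p + ((j:ℕ)+2 : ℕ) = p + 2 + (j:ℕ) := by push_cast; ring
      rw [e1, e2]
      split_ifs <;> first | rfl | omega
    rw [hN00, hm1]
    simp
  rw [hNdet]
  simp
  ring

section helpers
variable (a b c : ℤ → ℂ)

noncomputable def AmatX (p : ℤ) (n : ℕ) : Matrix (Fin 2) (Fin 2) ℂ :=
  ((List.range n).map (fun i => (!![a (p + (i : ℕ)), -(b (p + (i : ℕ)) * c (p + (i : ℕ))); 1, 0] : Matrix (Fin 2) (Fin 2) ℂ))).prod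

lemma AmatX_succ (p : ℤ) (n : ℕ) :
    AmatX a b c p (n+1)
      = !![a p, -(b p * c p); 1, 0] * AmatX a b c (p+1) n := by
  unfold AmatX
  rw [List.range_succ_eq_map, List.map_cons, List.prod_cons, List.map_map]
  congr 2
  · norm_num
  · congr 1
    funext i
    simp only [Function.comp_apply]
    have e1 : p + ((i + 1 : ℕ) : ℤ) = p + 1 + (i : ℕ) := by push_cast; ring
    rw [e1]

lemma Tmat_det_zero (p : ℤ) : (Tmat a b c p 0).det = 1 := by
  simp [Tmat]

lemma Tmat_det_one (p : ℤ) : (Tmat a b c p 1).det = a p := by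
  simp [Tmat, Matrix.det_fin_one]

lemma AmatX_entries (p : ℤ) (n : ℕ) :
    (AmatX a b c p (n+1)) 0 0 = (Tmat a b c p (n+1)).det ∧
    (AmatX a b c p (n+1)) 1 0 = (Tmat a b c (p+1) n).det := by
  induction n generalizing p with
  | zero =>
      rw [AmatX_succ]
      have h0 : AmatX a b c (p+1) 0 = 1 := by simp [AmatX]
      rw [h0, mul_one, Tmat_det_one, Tmat_det_zero]
      constructor <;> norm_num
  | succ n ih =>
      rw [AmatX_succ]
      obtain ⟨ih0, ih1⟩ := ih (p+1)
      constructor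
      · rw [Tmat_det_rec]
        rw [Matrix.mul_apply, Fin.sum_univ_two]
        rw [show (p:ℤ) + 1 + 1 = p + 2 by ring] at ih1
        rw [ih0, ih1]
        norm_num
        ring
      · rw [Matrix.mul_apply, Fin.sum_univ_two, ih0]
        norm_num
end helpers

lemma period_two_cases (f : ℤ → ℂ) (hf : ∀ k : ℤ, f (k + 2) = f k) (p : ℤ) :
    (f p = f 0 ∧ f (p+1) = f 1) ∨ (f p = f 1 ∧ f (p+1) = f 0) := by
  induction p using Int.induction_on with
  | zero => left; exact ⟨rfl, rfl⟩
  | succ k ih =>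
      rcases ih with ⟨h1, h2⟩ | ⟨h1, h2⟩
      · right
        refine ⟨h2, ?_⟩
        rw [show (k : ℤ) + 1 + 1 = k + 2 by ring, hf, h1]
      · left
        refine ⟨h2, ?_⟩
        rw [show (k : ℤ) + 1 + 1 = k + 2 by ring, hf, h1]
  | pred k ih =>
      rcases ih with ⟨h1, h2⟩ | ⟨h1, h2⟩
      · right
        constructor
        · rw [show (-(k:ℤ) - 1) = (-(k:ℤ) - 1) by rfl]
          have := hf (-(k:ℤ) - 1)
          rw [show (-(k:ℤ) - 1 + 2) = -(k:ℤ) + 1 by ring] at this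
          rw [← this, h2]
        · rw [show (-(k:ℤ) - 1 + 1) = -(k:ℤ) by ring, h1]
      · left
        constructor
        · have := hf (-(k:ℤ) - 1)
          rw [show (-(k:ℤ) - 1 + 2) = -(k:ℤ) + 1 by ring] at this
          rw [← this, h2]
        · rw [show (-(k:ℤ) - 1 + 1) = -(k:ℤ) by ring, h1]

lemma mat2_sq (M : Matrix (Fin 2) (Fin 2) ℂ) :
    M * M = (M 0 0 + M 1 1) • M - (M 0 0 * M 1 1 - M 0 1 * M 1 0) • (1 : Matrix (Fin 2) (Fin 2) ℂ) := by
  ext i j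
  fin_cases i <;> fin_cases j <;>
    simp [Matrix.mul_apply, Fin.sum_univ_two, Matrix.one_apply, smul_eq_mul] <;> ring

lemma mat2_pow_cheb (M : Matrix (Fin 2) (Fin 2) ℂ) (s x : ℂ)
    (hM : M * M = (2*s*x) • M - (s^2) • (1 : Matrix (Fin 2) (Fin 2) ℂ)) (k : ℕ) :
    M ^ (k+1) = (s^k * (Polynomial.Chebyshev.U ℂ (k : ℤ)).eval x) • M
      - (s^(k+1) * (Polynomial.Chebyshev.U ℂ ((k : ℤ) - 1)).eval x) • (1 : Matrix (Fin 2) (Fin 2) ℂ) := by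
  induction k with
  | zero =>
      simp [Polynomial.Chebyshev.U_zero, Polynomial.Chebyshev.U_neg_one]
  | succ k ih =>
      have hu : (Polynomial.Chebyshev.U ℂ ((k:ℤ) + 1)).eval x
          = 2 * x * (Polynomial.Chebyshev.U ℂ (k:ℤ)).eval x
            - (Polynomial.Chebyshev.U ℂ ((k:ℤ) - 1)).eval x := by
        have := Polynomial.Chebyshev.U_add_two ℂ ((k:ℤ) - 1)
        rw [show (k:ℤ) - 1 + 2 = (k:ℤ) + 1 by ring, show (k:ℤ) - 1 + 1 = (k:ℤ) by ring] at this
        rw [this]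
        simp
      rw [pow_succ, ih, sub_mul, smul_mul_assoc, smul_mul_assoc, hM, one_mul]
      rw [show ((k:ℕ)+1+1 : ℕ) = k+2 by ring]
      push_cast
      rw [show ((k:ℤ) + 1 - 1) = (k:ℤ) by ring, hu]
      rw [smul_sub, smul_smul, smul_smul]
      ext i j
      simp [Matrix.sub_apply, Matrix.smul_apply, smul_eq_mul]
      ring

lemma AmatX_period (a b c : ℤ → ℂ)
    (ha : ∀ k : ℤ, a (k + 2) = a k) (hb : ∀ k : ℤ, b (k + 2) = b k)
    (hc : ∀ k : ℤ, c (k + 2) = c k) (p : ℤ) (n : ℕ) :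
    AmatX a b c (p+2) n = AmatX a b c p n := by
  unfold AmatX
  congr 1
  apply List.map_congr_left
  intro i _
  rw [show (p + 2 + (i:ℕ) : ℤ) = (p + (i:ℕ)) + 2 by ring, ha, hb, hc]

lemma AmatX_two_mul (a b c : ℤ → ℂ)
    (ha : ∀ k : ℤ, a (k + 2) = a k) (hb : ∀ k : ℤ, b (k + 2) = b k)
    (hc : ∀ k : ℤ, c (k + 2) = c k) (p : ℤ) (m : ℕ) :
    AmatX a b c p (2*m) = (AmatX a b c p 2) ^ m := by
  induction m with
  | zero => simp [AmatX]
  | succ m ih =>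
      have h2 : AmatX a b c p 2
          = !![a p, -(b p * c p); 1, 0] * !![a (p+1), -(b (p+1) * c (p+1)); 1, 0] := by
        show (List.map _ (List.range 2)).prod = _
        rw [show List.range 2 = [0, 1] from rfl]
        simp only [List.map_cons, List.map_nil, List.prod_cons, List.prod_nil, mul_one]
        norm_num
      rw [show 2*(m+1) = (2*m)+1+1 by ring, AmatX_succ, AmatX_succ,
        show (p + 1 + 1 : ℤ) = p + 2 by ring, AmatX_period a b c ha hb hc, ih,
        pow_succ', h2, mul_assoc]

lemma contK_eq_Tmat (a b c : ℤ → ℂ) (p : ℤ) (n : ℕ) :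
    contK a b c p n = (Tmat a b c p n).det := by
  unfold contK Tmat
  rw [if_neg (Int.not_lt.mpr (Int.natCast_nonneg n))]
  rfl

/-- Periodic continuants of period 2: writing `a₁ = a` at odd indices, `a₂ = a` at even
indices (and similarly for `b, c`), if `b₁c₁b₂c₂ ≠ 0`, `s² = b₁c₁b₂c₂` and
`x = (a₁a₂ − b₁c₁ − b₂c₂)/(2s)`, then
`K_{2m}(p) = s^{m−1}·U_{m−1}(x)·(a₁a₂ − b_p c_p) − s^m·U_{m−2}(x)` and
`K_{2m−1}(p+1) = s^{m−1}·U_{m−1}(x)·a_{p+1}`. -/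
theorem contK_period_two (a b c : ℤ → ℂ)
    (ha : ∀ k : ℤ, a (k + 2) = a k) (hb : ∀ k : ℤ, b (k + 2) = b k)
    (hc : ∀ k : ℤ, c (k + 2) = c k)
    (hbc : b 1 * c 1 * (b 0 * c 0) ≠ 0) (s : ℂ) (hs : s ^ 2 = b 1 * c 1 * (b 0 * c 0))
    (x : ℂ) (hx : x = (a 1 * a 0 - b 1 * c 1 - b 0 * c 0) / (2 * s))
    (p : ℤ) (m : ℕ) (hm : 1 ≤ m) :
    contK a b c p (2 * (m : ℤ)) =
        s ^ (m - 1) * (Polynomial.Chebyshev.U ℂ ((m : ℤ) - 1)).eval x * (a 1 * a 0 - b p * c p)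
          - s ^ m * (Polynomial.Chebyshev.U ℂ ((m : ℤ) - 2)).eval x ∧
    contK a b c (p + 1) (2 * (m : ℤ) - 1) =
        s ^ (m - 1) * (Polynomial.Chebyshev.U ℂ ((m : ℤ) - 1)).eval x * a (p + 1) := by
  obtain ⟨k, rfl⟩ : ∃ k, m = k + 1 := ⟨m - 1, by omega⟩
  have hs0 : s ≠ 0 := by
    intro h; rw [h] at hs; exact hbc (by simpa using hs.symm)
  -- parity facts
  have haa : a p * a (p + 1) = a 1 * a 0 := by
    rcases period_two_cases a ha p with ⟨h1, h2⟩ | ⟨h1, h2⟩ <;> rw [h1, h2] <;> ring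
  have hfbc : ∀ k : ℤ, (fun k : ℤ => b k * c k) (k + 2) = (fun k : ℤ => b k * c k) k := by
    intro k; show b (k+2) * c (k+2) = b k * c k; rw [hb, hc]
  have hbc2 : (b p * c p) * (b (p+1) * c (p+1)) = b 1 * c 1 * (b 0 * c 0) := by
    rcases period_two_cases (fun k : ℤ => b k * c k) hfbc p with ⟨h1, h2⟩ | ⟨h1, h2⟩ <;>
      rw [h1, h2] <;> ring
  have hsum : b p * c p + b (p+1) * c (p+1) = b 1 * c 1 + b 0 * c 0 := by
    rcases period_two_cases (fun k : ℤ => b k * c k) hfbc p with ⟨h1, h2⟩ | ⟨h1, h2⟩ <;>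
      rw [h1, h2] <;> ring
  set M := AmatX a b c p 2 with hMdef
  have hM : M = !![a p * a (p+1) - b p * c p, a p * (-(b (p+1) * c (p+1)));
      a (p+1), -(b (p+1) * c (p+1))] := by
    have h2 : M = !![a p, -(b p * c p); 1, 0] * !![a (p+1), -(b (p+1) * c (p+1)); 1, 0] := by
      show (List.map _ (List.range 2)).prod = _
      rw [show List.range 2 = [0, 1] from rfl]
      simp only [List.map_cons, List.map_nil, List.prod_cons, List.prod_nil, mul_one]
      norm_num
    rw [h2, Matrix.mul_fin_two]
    norm_num
    ring_nf
  have hM00 : M 0 0 = a p * a (p+1) - b p * c p := by rw [hM]; norm_num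
  have hM01 : M 0 1 = a p * (-(b (p+1) * c (p+1))) := by rw [hM]; norm_num
  have hM10 : M 1 0 = a (p+1) := by rw [hM]; norm_num
  have hM11 : M 1 1 = -(b (p+1) * c (p+1)) := by rw [hM]; norm_num
  have hMM : M * M = (2*s*x) • M - (s^2) • (1 : Matrix (Fin 2) (Fin 2) ℂ) := by
    have e1 : M 0 0 + M 1 1 = 2*s*x := by
      have hx2 : 2*s*x = a 1 * a 0 - b 1 * c 1 - b 0 * c 0 := by
        rw [hx]; field_simp
      rw [hM00, hM11, hx2]
      linear_combination haa - hsum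
    have e2 : M 0 0 * M 1 1 - M 0 1 * M 1 0 = s^2 := by
      rw [hM00, hM01, hM10, hM11, hs]
      linear_combination hbc2
    rw [mat2_sq M, e1, e2]
  have hpow := mat2_pow_cheb M s x hMM k
  have hA : AmatX a b c p (2*(k+1)) = M ^ (k+1) := AmatX_two_mul a b c ha hb hc p (k+1)
  have hE := AmatX_entries a b c p (2*k+1)
  rw [show 2*k+1+1 = 2*(k+1) by ring] at hE
  obtain ⟨hE0, hE1⟩ := hE
  have hc1 : contK a b c p (2 * ((k+1 : ℕ) : ℤ)) = (Tmat a b c p (2*(k+1))).det := by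
    rw [show (2 * ((k+1 : ℕ) : ℤ)) = ((2*(k+1) : ℕ) : ℤ) by push_cast; ring]
    exact contK_eq_Tmat a b c p (2*(k+1))
  have hc2 : contK a b c (p+1) (2 * ((k+1 : ℕ) : ℤ) - 1) = (Tmat a b c (p+1) (2*k+1)).det := by
    rw [show (2 * ((k+1 : ℕ) : ℤ) - 1) = ((2*k+1 : ℕ) : ℤ) by push_cast; ring]
    exact contK_eq_Tmat a b c (p+1) (2*k+1)
  rw [show ((k+1 : ℕ) : ℤ) - 1 = (k : ℤ) by push_cast; ring,
    show ((k+1 : ℕ) : ℤ) - 2 = (k : ℤ) - 1 by push_cast; ring,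
    show (k+1) - 1 = k from rfl]
  rw [hc1, hc2, ← hE0, ← hE1, hA, hpow]
  have h100 : (1 : Matrix (Fin 2) (Fin 2) ℂ) 0 0 = 1 := by simp
  have h110 : (1 : Matrix (Fin 2) (Fin 2) ℂ) 1 0 = 0 := by simp
  constructor
  · rw [Matrix.sub_apply, Matrix.smul_apply, Matrix.smul_apply, h100, hM00,
      smul_eq_mul, smul_eq_mul]
    linear_combination (s^k * (Polynomial.Chebyshev.U ℂ (k:ℤ)).eval x) * haa
  · rw [Matrix.sub_apply, Matrix.smul_apply, Matrix.smul_apply, h110, hM10,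
      smul_eq_mul, smul_eq_mul]
    ring
end

section
/- Let q be a nonzero complex number and define the q-deformed Fibonacci sequence F_n(q) by F_1(q) = 1, F_2(q) = 1, F_{2m}(q) = F_{2m−1}(q) + q^{−1}·F_{2m−2}(q) and F_{2m+1}(q) = F_{2m}(q) + q·F_{2m−1}(q) for m ≥ 1. Set x = (1 + q + q^{−1})/2. Then for every integer m ≥ 0, F_{2m+1}(q) = (1+q)·U_{m−1}(x) − U_{m−2}(x) and F_{2m+2}(q) = U_m(x). -/
/-- The `q`-deformed Fibonacci numbers `F_n(q)` (with `F₁ = F₂ = 1`,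
`F_{2m} = F_{2m−1} + q⁻¹ F_{2m−2}`, `F_{2m+1} = F_{2m} + q F_{2m−1}` for `m ≥ 1`)
satisfy `F_{2m+1}(q) = (1+q)·U_{m−1}(x) − U_{m−2}(x)` and `F_{2m+2}(q) = U_m(x)`,
where `x = (1 + q + q⁻¹)/2`. -/
theorem qFibonacci_eq_chebyshevU (q : ℂ) (hq : q ≠ 0) (F : ℕ → ℂ)
    (hF1 : F 1 = 1) (hF2 : F 2 = 1)
    (hFeven : ∀ m : ℕ, 1 ≤ m → F (2 * m) = F (2 * m - 1) + q⁻¹ * F (2 * m - 2))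
    (hFodd : ∀ m : ℕ, 1 ≤ m → F (2 * m + 1) = F (2 * m) + q * F (2 * m - 1))
    (x : ℂ) (hx : x = (1 + q + q⁻¹) / 2) (m : ℕ) :
    F (2 * m + 1) = (1 + q) * (Polynomial.Chebyshev.U ℂ ((m : ℤ) - 1)).eval x
        - (Polynomial.Chebyshev.U ℂ ((m : ℤ) - 2)).eval x ∧
    F (2 * m + 2) = (Polynomial.Chebyshev.U ℂ (m : ℤ)).eval x := by
  have h2x : 2 * x = 1 + q + q⁻¹ := by rw [hx]; ring
  have hrec : ∀ n : ℤ, (Polynomial.Chebyshev.U ℂ (n + 2)).eval x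
      = (1 + q + q⁻¹) * (Polynomial.Chebyshev.U ℂ (n + 1)).eval x
        - (Polynomial.Chebyshev.U ℂ n).eval x := by
    intro n
    rw [Polynomial.Chebyshev.U_add_two]
    simp [← h2x]
  induction m with
  | zero =>
    constructor
    · simpa [Polynomial.Chebyshev.U_neg_one, Polynomial.Chebyshev.U_neg_two] using hF1
    · simpa [Polynomial.Chebyshev.U_zero] using hF2
  | succ k ih =>
    obtain ⟨ih1, ih2⟩ := ih
    have heven := hFeven (k + 2) (by omega)
    have hodd := hFodd (k + 1) (by omega)
    have e1 : 2 * (k + 1) = 2 * k + 2 := by ring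
    have e2 : 2 * (k + 1) - 1 = 2 * k + 1 := by omega
    have e3 : 2 * (k + 2) = 2 * k + 4 := by ring
    have e4 : 2 * (k + 2) - 1 = 2 * k + 3 := by omega
    have e5 : 2 * (k + 2) - 2 = 2 * k + 2 := by omega
    rw [e2, e1] at hodd
    rw [e4, e5, e3] at heven
    have huk : (Polynomial.Chebyshev.U ℂ ((k : ℤ))).eval x
        = (1 + q + q⁻¹) * (Polynomial.Chebyshev.U ℂ ((k : ℤ) - 1)).eval x
          - (Polynomial.Chebyshev.U ℂ ((k : ℤ) - 2)).eval x := by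
      have h := hrec ((k : ℤ) - 2)
      rw [show (k : ℤ) - 2 + 2 = (k : ℤ) by ring, show (k : ℤ) - 2 + 1 = (k : ℤ) - 1 by ring] at h
      exact h
    have hcast1 : ((k : ℤ) + 1 : ℤ) - 1 = (k : ℤ) := by ring
    have hcast2 : ((k : ℤ) + 1 : ℤ) - 2 = (k : ℤ) - 1 := by ring
    have hodd' : F (2 * k + 3)
        = (1 + q) * (Polynomial.Chebyshev.U ℂ ((k : ℤ))).eval x
          - (Polynomial.Chebyshev.U ℂ ((k : ℤ) - 1)).eval x := by
      rw [show 2 * k + 3 = 2 * k + 2 + 1 by ring, hodd, ih2, ih1, huk]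
      field_simp
      ring
    constructor
    · rw [show ((k + 1 : ℕ) : ℤ) - 1 = (k : ℤ) by push_cast; ring,
        show ((k + 1 : ℕ) : ℤ) - 2 = (k : ℤ) - 1 by push_cast; ring]
      rw [show 2 * (k + 1) + 1 = 2 * k + 3 by ring]
      exact hodd'
    · have huk1 : (Polynomial.Chebyshev.U ℂ ((k : ℤ) + 1)).eval x
          = (1 + q + q⁻¹) * (Polynomial.Chebyshev.U ℂ ((k : ℤ))).eval x
            - (Polynomial.Chebyshev.U ℂ ((k : ℤ) - 1)).eval x := by
        have h := hrec ((k : ℤ) - 1)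
        rw [show (k : ℤ) - 1 + 2 = (k : ℤ) + 1 by ring, show (k : ℤ) - 1 + 1 = (k : ℤ) by ring] at h
        exact h
      rw [show 2 * (k + 1) + 2 = 2 * k + 4 by ring, show ((k + 1 : ℕ) : ℤ) = (k : ℤ) + 1 by push_cast; ring,
        heven, hodd', ih2, huk1]
      ring
end
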